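/- Let G be a vertex-minimal counterexample to the claim that every planar graph with no 4-cycles is (0, 0, 117)-colorable. Then every vertex of G of degree at most 119 has a neighbor of degree at least 120. -/

import Mathlib

open SimpleGraph

/-- `H` is a minor of `G`: branch sets are nonempty, connected, pairwise disjoint,
and edges of `H` are realized between branch sets. -/
def SimpleGraph.IsMinor {W V : Type*} (H : SimpleGraph W) (G : SimpleGraph V) : Prop :=
  ∃ f : W → Set V, (∀ w, (f w).Nonempty) ∧ (∀ w, (G.induce (f w)).Connected) ∧
    (∀ w w', w ≠ w' → Disjoint (f w) (f w')) ∧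
    (∀ w w', H.Adj w w' → ∃ a ∈ f w, ∃ b ∈ f w', G.Adj a b)

/-- A graph is planar iff it has no `K₅` minor and no `K₃,₃` minor (Wagner's theorem). -/
def SimpleGraph.Planar {V : Type*} (G : SimpleGraph V) : Prop :=
  ¬ (completeGraph (Fin 5)).IsMinor G ∧
    ¬ (completeBipartiteGraph (Fin 3) (Fin 3)).IsMinor G

/-- `G` contains no cycle of length `n` (as a subgraph). -/
def SimpleGraph.HasNoCycleOfLength {V : Type*} (G : SimpleGraph V) (n : ℕ) : Prop :=
  ∀ (v : V) (w : G.Walk v v), w.IsCycle → w.length ≠ n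

/-- `f` is a `(d 0, …, d (k-1))`-coloring of `G`: each vertex has at most `d (f v)`
neighbors in its own color class. -/
def SimpleGraph.IsDefectiveColoring {V : Type*} {k : ℕ} (G : SimpleGraph V)
    (d : Fin k → ℕ) (f : V → Fin k) : Prop :=
  ∀ v, {u | G.Adj v u ∧ f u = f v}.ncard ≤ d (f v)

/-- `G` is `(d 0, …, d (k-1))`-colorable. -/
def SimpleGraph.DefectiveColorable {V : Type*} {k : ℕ} (G : SimpleGraph V)
    (d : Fin k → ℕ) : Prop :=
  ∃ f : V → Fin k, G.IsDefectiveColoring d f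

lemma minor_trans_induce' {W V : Type*} (H : SimpleGraph W) (G : SimpleGraph V) (s : Set V)
    (h : H.IsMinor (G.induce s)) : H.IsMinor G := by
  obtain ⟨f, hne, hconn, hdisj, hedge⟩ := h
  refine ⟨fun w => Subtype.val '' f w, fun w => (hne w).image _, fun w => ?_, ?_, ?_⟩
  · have e : (G.induce s).induce (f w) ≃g G.induce (Subtype.val '' f w) := by
      refine ⟨Equiv.Set.image Subtype.val (f w) Subtype.val_injective, ?_⟩
      intro a b
      simp [Equiv.Set.image, Equiv.Set.imageOfInjOn]
    exact e.connected_iff.mp (hconn w)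
  · intro w w' hww
    exact (Set.disjoint_image_iff Subtype.val_injective).mpr (hdisj w w' hww)
  · intro w w' ha
    obtain ⟨a, haf, b, hbf, hab⟩ := hedge w w' ha
    exact ⟨a, Set.mem_image_of_mem _ haf, b, Set.mem_image_of_mem _ hbf, hab⟩

lemma planar_induce' {V : Type*} (G : SimpleGraph V) (s : Set V) (h : G.Planar) :
    (G.induce s).Planar :=
  ⟨fun hm => h.1 (minor_trans_induce' _ _ _ hm), fun hm => h.2 (minor_trans_induce' _ _ _ hm)⟩

lemma nocycle_induce' {V : Type*} (G : SimpleGraph V) (s : Set V) (n : ℕ)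
    (h : G.HasNoCycleOfLength n) : (G.induce s).HasNoCycleOfLength n := by
  intro v w hw hl
  exact h v ((w.map (Embedding.induce s).toHom)) (hw.map Subtype.val_injective)
    (by exact (SimpleGraph.Walk.length_map _ _).trans hl)

lemma common_nbr' {V : Type*} (G : SimpleGraph V) (h4 : G.HasNoCycleOfLength 4)
    {x y a b : V} (hxy : x ≠ y) (hab : a ≠ b)
    (h1 : G.Adj x a) (h2 : G.Adj x b) (h3 : G.Adj y a) (h5 : G.Adj y b) : False := by
  refine h4 x (.cons h1 (.cons h3.symm (.cons h5 (.cons h2.symm .nil)))) ?_ rfl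
  constructor
  · constructor
    · constructor
      simp only [Walk.edges_cons, Walk.edges_nil, List.nodup_cons, List.mem_cons,
        List.mem_singleton, List.not_mem_nil, or_false, List.nodup_nil, and_true,
        Sym2.eq_iff]
      push_neg
      refine ⟨⟨?_,?_,?_⟩,⟨?_,?_⟩,?_⟩ <;> aesop
    · simp
  · simp [Walk.support, hab, hxy, h1.ne', h2.ne', h3.ne', h5.ne', Ne.symm hxy, Ne.symm hab]
    aesop

theorem stmt12 (V : Type) [Fintype V] (G : SimpleGraph V)
    (hp : G.Planar) (h4 : G.HasNoCycleOfLength 4)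
    (hnc : ¬ G.DefectiveColorable ![0, 0, 117])
    (hmin : ∀ (W : Type) [Fintype W] (H : SimpleGraph W), H.Planar →
      H.HasNoCycleOfLength 4 → Fintype.card W < Fintype.card V →
      H.DefectiveColorable ![0, 0, 117]) :
    ∀ v : V, (G.neighborSet v).ncard ≤ 119 →
      ∃ u, G.Adj v u ∧ 120 ≤ (G.neighborSet u).ncard := by
  classical
  intro v hdeg
  by_contra hno
  push_neg at hno
  apply hnc
  -- the graph with v removed
  set s : Set V := {u : V | u ≠ v} with hs
  haveI : Fintype ↥s := Fintype.ofFinite _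
  have hcard : Fintype.card ↥s < Fintype.card V :=
    Fintype.card_lt_of_injective_of_notMem Subtype.val Subtype.val_injective
      (b := v) (by intro hmem; obtain ⟨a, ha⟩ := hmem; exact a.2 ha)
  obtain ⟨f₀, hf₀⟩ := hmin ↥s (G.induce s) (planar_induce' G s hp)
    (nocycle_induce' G s 4 h4) hcard
  set f : V → Fin 3 := fun u => if h : u = v then 2 else f₀ ⟨u, h⟩ with hfdef
  have hfne : ∀ (u : V) (h : u ≠ v), f u = f₀ ⟨u, h⟩ := fun u h => dif_neg h
  have hres : ∀ (w : V) (hw : w ≠ v),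
      {y | G.Adj w y ∧ y ≠ v ∧ f y = f w}.ncard ≤ ![0, 0, 117] (f w) := by
    intro w hw
    rw [hfne w hw]
    have himg : {y | G.Adj w y ∧ y ≠ v ∧ f y = f₀ ⟨w, hw⟩} =
        Subtype.val '' {u : ↥s | (G.induce s).Adj ⟨w, hw⟩ u ∧ f₀ u = f₀ ⟨w, hw⟩} := by
      ext y
      simp only [Set.mem_setOf_eq, Set.mem_image]
      constructor
      · rintro ⟨ha, hyv, hfy⟩
        exact ⟨⟨y, hyv⟩, ⟨ha, by rwa [← hfne y hyv]⟩, rfl⟩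
      · rintro ⟨⟨y', hy'⟩, ⟨ha, hf⟩, rfl⟩
        exact ⟨ha, hy', by rwa [hfne y' hy']⟩
    rw [himg, Set.ncard_image_of_injective _ Subtype.val_injective]
    exact hf₀ ⟨w, hw⟩
  -- the easy case: v misses color 0 or 1 in its neighborhood
  have easy : ∀ c : Fin 3, (![0, 0, 117] : Fin 3 → ℕ) c = 0 →
      (¬ ∃ y, G.Adj v y ∧ f y = c) →
      G.DefectiveColorable ![0, 0, 117] := by
    intro c hdc hnoc
    refine ⟨fun u => if u = v then c else f u, fun w => ?_⟩
    by_cases hw : w = v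
    · simp only [if_pos hw]
      have : {u | G.Adj w u ∧ (if u = v then c else f u) = c} = ∅ := by
        ext u
        simp only [Set.mem_setOf_eq, Set.mem_empty_iff_false, iff_false, not_and]
        intro ha
        have hav : G.Adj v u := hw ▸ ha
        rw [if_neg hav.ne']
        exact fun hfu => hnoc ⟨u, hav, hfu⟩
      rw [this, Set.ncard_empty]
      omega
    · simp only [if_neg hw]
      refine le_trans (Set.ncard_le_ncard ?_ (Set.toFinite _)) (hres w hw)
      rintro u ⟨ha, hfu⟩
      by_cases huv : u = v
      · subst huv
        rw [if_pos rfl] at hfu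
        exact absurd ⟨w, ha.symm, hfu.symm⟩ hnoc
      · rw [if_neg huv] at hfu
        exact ⟨ha, huv, hfu⟩
  by_cases h0 : ∃ y, G.Adj v y ∧ f y = 0
  swap
  · exact easy 0 rfl h0
  by_cases h1 : ∃ y, G.Adj v y ∧ f y = 1
  swap
  · exact easy 1 rfl h1
  obtain ⟨x0, hx0a, hx0c⟩ := h0
  obtain ⟨x1, hx1a, hx1c⟩ := h1
  letI : LinearOrder V := LinearOrder.lift' (fun x => ((Fintype.equivFin V) x : ℕ))
    (fun a b h => (Fintype.equivFin V).injective (Fin.val_injective h))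
  set Bad : V → Prop := fun u => G.Adj v u ∧ f u = 2 ∧
    117 ≤ {y | G.Adj u y ∧ y ≠ v ∧ f y = 2}.ncard with hBad
  set B' : V → Prop := fun u => Bad u ∧ ∀ u'', Bad u'' → G.Adj u u'' → u < u'' with hB'
  set col : V → Fin 3 := fun u => if ∃ z, G.Adj u z ∧ z ≠ v ∧ f z = 0 then 1 else 0
    with hcol
  have hcolne2 : ∀ u, col u ≠ 2 := by
    intro u
    rw [hcol]
    dsimp only
    split <;> decide
  -- F1 : a bad vertex has at most one neighbor that is neither v nor colored 2
  have F1 : ∀ u, Bad u → {y | G.Adj u y ∧ y ≠ v ∧ f y ≠ 2}.ncard ≤ 1 := by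
    intro u hu
    obtain ⟨hadj, hf2, hcard⟩ := hu
    set A := {y | G.Adj u y ∧ y ≠ v ∧ f y = 2} with hA
    set B := {y | G.Adj u y ∧ y ≠ v ∧ f y ≠ 2} with hB
    have hvA : v ∉ A := fun h => h.2.1 rfl
    have hsub : insert v A ∪ B ⊆ G.neighborSet u := by
      rintro y (hy | hy)
      · rcases Set.mem_insert_iff.mp hy with rfl | hy
        · exact hadj.symm
        · exact hy.1
      · exact hy.1
    have hdisj : Disjoint (insert v A) B := by
      rw [Set.disjoint_left]
      rintro y hy hyB
      rcases Set.mem_insert_iff.mp hy with rfl | hy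
      · exact hyB.2.1 rfl
      · exact hyB.2.2 hy.2.2
    have hle : (insert v A ∪ B).ncard ≤ 119 := by
      refine le_trans (Set.ncard_le_ncard hsub (Set.toFinite _)) ?_
      have := hno u hadj
      omega
    rw [Set.ncard_union_eq hdisj (Set.toFinite _) (Set.toFinite _),
      Set.ncard_insert_of_notMem hvA (Set.toFinite _)] at hle
    omega
  -- F2 : the recoloring color of a bad vertex avoids its non-2 neighbors
  have F2 : ∀ u, Bad u → ∀ y, G.Adj u y → y ≠ v → f y ≠ 2 → f y ≠ col u := by
    intro u hu y hy hyv hy2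
    have h1 := (Set.ncard_le_one (Set.toFinite _)).mp (F1 u hu)
    by_cases hz : ∃ z, G.Adj u z ∧ z ≠ v ∧ f z = 0
    · have hc : col u = 1 := if_pos hz
      rw [hc]
      intro hfy
      obtain ⟨z, hz1, hz2, hz3⟩ := hz
      have hyz : y = z := h1 y ⟨hy, hyv, hy2⟩ z ⟨hz1, hz2, by rw [hz3]; decide⟩
      rw [hyz, hz3] at hfy
      exact absurd hfy (by decide)
    · have hc : col u = 0 := if_neg hz
      rw [hc]
      exact fun hfy => hz ⟨y, hy, hyv, hfy⟩
  -- F3 : no two B' vertices are adjacent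
  have F3 : ∀ u u', B' u → B' u' → ¬ G.Adj u u' := by
    intro u u' hu hu' hadj
    exact lt_asymm (hu.2 u' hu'.1 hadj) (hu'.2 u hu.1 hadj.symm)
  -- F4 : a bad vertex not in B' has a B' neighbor
  have F4 : ∀ u, Bad u → ¬ B' u → ∃ u', B' u' ∧ G.Adj u u' ∧ f u' = 2 ∧ u' ≠ v := by
    intro u hu hnB
    obtain ⟨u'', hbu'', hadj'', hlt⟩ : ∃ u'', Bad u'' ∧ G.Adj u u'' ∧ ¬ u < u'' := by
      by_contra hc
      push_neg at hc
      exact hnB ⟨hu, fun w hw ha => hc w hw ha⟩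
    have hne : u'' ≠ u := hadj''.ne'
    have hlt' : u'' < u := lt_of_le_of_ne (not_lt.mp hlt) hne
    refine ⟨u'', ⟨hbu'', ?_⟩, hadj'', hbu''.2.1, hbu''.1.ne'⟩
    intro w hw hadjw
    by_cases hwu : w = u
    · subst hwu; exact hlt'
    · exfalso
      exact common_nbr' G h4 (x := u'') (y := v) (a := u) (b := w)
        hbu''.1.ne' (Ne.symm hwu) hadj''.symm hadjw hu.1 hw.1
  set g : V → Fin 3 := fun u => if u = v then 2 else if B' u then col u else f u with hg
  have hgv : g v = 2 := if_pos rfl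
  have hgB' : ∀ u, u ≠ v → B' u → g u = col u := by
    intro u hu hB
    rw [hg]; dsimp only; rw [if_neg hu, if_pos hB]
  have hgf : ∀ u, u ≠ v → ¬ B' u → g u = f u := by
    intro u hu hB
    rw [hg]; dsimp only; rw [if_neg hu, if_neg hB]
  have hgne2 : ∀ u, u ≠ v → B' u → g u ≠ 2 := by
    intro u hu hB
    rw [hgB' u hu hB]; exact hcolne2 u
  refine ⟨g, fun w => ?_⟩
  by_cases hwv : w = v
  · -- w = v : colored 2, at most 117 neighbors colored 2
    rw [hwv, hgv]
    have hx0v : x0 ≠ v := hx0a.ne'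
    have hx1v : x1 ≠ v := hx1a.ne'
    have hgx0 : g x0 = 0 := by
      rw [hgf x0 hx0v (fun hB => by rw [hB.1.2.1] at hx0c; exact absurd hx0c (by decide))]
      exact hx0c
    have hgx1 : g x1 = 1 := by
      rw [hgf x1 hx1v (fun hB => by rw [hB.1.2.1] at hx1c; exact absurd hx1c (by decide))]
      exact hx1c
    have hx01 : x0 ≠ x1 := by
      intro h; rw [h, hx1c] at hx0c; exact absurd hx0c (by decide)
    have hsub : {u | G.Adj v u ∧ g u = 2} ⊆ G.neighborSet v \ {x0, x1} := by
      rintro u ⟨ha, hgu⟩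
      refine ⟨ha, ?_⟩
      rintro (rfl | rfl)
      · rw [hgx0] at hgu; exact absurd hgu (by decide)
      · rw [hgx1] at hgu; exact absurd hgu (by decide)
    have hpair : ({x0, x1} : Set V) ⊆ G.neighborSet v := by
      rintro y (rfl | rfl)
      · exact hx0a
      · exact hx1a
    have h2 : ({x0, x1} : Set V).ncard = 2 := Set.ncard_pair hx01
    have h3 := Set.ncard_le_ncard hsub (Set.toFinite _)
    rw [Set.ncard_diff hpair (Set.toFinite _), h2] at h3
    have : (![0, 0, 117] : Fin 3 → ℕ) 2 = 117 := rfl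
    omega
  by_cases hBw : B' w
  · -- w recolored : needs zero same-colored neighbors
    rw [hgB' w hwv hBw]
    have hempty : {u | G.Adj w u ∧ g u = col w} = ∅ := by
      ext u
      simp only [Set.mem_setOf_eq, Set.mem_empty_iff_false, iff_false, not_and]
      intro ha hgu
      by_cases huv : u = v
      · rw [huv, hgv] at hgu; exact hcolne2 w hgu.symm
      by_cases hBu : B' u
      · exact F3 w u hBw hBu ha
      · rw [hgf u huv hBu] at hgu
        by_cases hu2 : f u = 2
        · rw [hu2] at hgu; exact hcolne2 w hgu.symm
        · exact F2 w hBw.1 u ha huv hu2 hgu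
    rw [hempty, Set.ncard_empty]
    have : col w = 0 ∨ col w = 1 := by
      rw [hcol]; dsimp only; split
      · right; rfl
      · left; rfl
    rcases this with h | h <;> rw [h] <;> exact le_refl 0
  · -- w keeps its color
    rw [hgf w hwv hBw]
    have hall : ∀ c : Fin 3, c = 0 ∨ c = 1 ∨ c = 2 := by decide
    rcases hall (f w) with hfw | hfw | hfw
    · -- f w = 0
      have hd : (![0, 0, 117] : Fin 3 → ℕ) (f w) = 0 := by rw [hfw]; rfl
      have hfw2 : f w ≠ 2 := by rw [hfw]; decide
      have hresempty : {y | G.Adj w y ∧ y ≠ v ∧ f y = f w} = ∅ := by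
        have h0 := hres w hwv
        rw [hd] at h0
        exact (Set.ncard_eq_zero (Set.toFinite _)).mp (Nat.le_zero.mp h0)
      have hempty : {u | G.Adj w u ∧ g u = f w} = ∅ := by
        ext u
        simp only [Set.mem_setOf_eq, Set.mem_empty_iff_false, iff_false, not_and]
        intro ha hgu
        by_cases huv : u = v
        · rw [huv, hgv] at hgu; exact hfw2 hgu.symm
        by_cases hBu : B' u
        · rw [hgB' u huv hBu] at hgu
          exact F2 u hBu.1 w ha.symm hwv hfw2 hgu.symm
        · rw [hgf u huv hBu] at hgu
          have hin : u ∈ ({y | G.Adj w y ∧ y ≠ v ∧ f y = f w} : Set V) := ⟨ha, huv, hgu⟩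
          rw [hresempty] at hin
          exact hin
      rw [hempty, Set.ncard_empty]
      exact Nat.zero_le _
    · -- f w = 1
      have hd : (![0, 0, 117] : Fin 3 → ℕ) (f w) = 0 := by rw [hfw]; rfl
      have hfw2 : f w ≠ 2 := by rw [hfw]; decide
      have hresempty : {y | G.Adj w y ∧ y ≠ v ∧ f y = f w} = ∅ := by
        have h0 := hres w hwv
        rw [hd] at h0
        exact (Set.ncard_eq_zero (Set.toFinite _)).mp (Nat.le_zero.mp h0)
      have hempty : {u | G.Adj w u ∧ g u = f w} = ∅ := by
        ext u
        simp only [Set.mem_setOf_eq, Set.mem_empty_iff_false, iff_false, not_and]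
        intro ha hgu
        by_cases huv : u = v
        · rw [huv, hgv] at hgu; exact hfw2 hgu.symm
        by_cases hBu : B' u
        · rw [hgB' u huv hBu] at hgu
          exact F2 u hBu.1 w ha.symm hwv hfw2 hgu.symm
        · rw [hgf u huv hBu] at hgu
          have hin : u ∈ ({y | G.Adj w y ∧ y ≠ v ∧ f y = f w} : Set V) := ⟨ha, huv, hgu⟩
          rw [hresempty] at hin
          exact hin
      rw [hempty, Set.ncard_empty]
      exact Nat.zero_le _
    · -- f w = 2
      have hgoal : {u | G.Adj w u ∧ g u = f w}.ncard ≤ 117 := by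
        rw [hfw]
        set Nf := {y | G.Adj w y ∧ y ≠ v ∧ f y = 2} with hNfdef
        have hNf : Nf.ncard ≤ 117 := by
          have h0 := hres w hwv
          rw [hfw] at h0
          exact h0
        have hmem : ∀ u, G.Adj w u → g u = 2 → u ≠ v → u ∈ Nf ∧ ¬ B' u := by
          intro u ha hgu huv
          by_cases hBu : B' u
          · rw [hgB' u huv hBu] at hgu
            exact absurd hgu (hcolne2 u)
          · rw [hgf u huv hBu] at hgu
            exact ⟨⟨ha, huv, hgu⟩, hBu⟩
        by_cases hwadj : G.Adj w v
        · by_cases hbad : Bad w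
          · obtain ⟨u', hBu', hadju', hfu', hu'v⟩ := F4 w hbad hBw
            have hsub : {u | G.Adj w u ∧ g u = 2} ⊆ insert v (Nf \ {u'}) := by
              rintro u ⟨ha, hgu⟩
              by_cases huv : u = v
              · exact Set.mem_insert_iff.mpr (Or.inl huv)
              · obtain ⟨hmemN, hnB⟩ := hmem u ha hgu huv
                exact Set.mem_insert_iff.mpr
                  (Or.inr ⟨hmemN, fun h => hnB (Set.mem_singleton_iff.mp h ▸ hBu')⟩)
            have hu'N : u' ∈ Nf := ⟨hadju', hu'v, hfu'⟩
            have h1 := Set.ncard_le_ncard hsub (Set.toFinite _)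
            have h2 := Set.ncard_insert_le v (Nf \ {u'})
            have h3 : (Nf \ {u'}).ncard = Nf.ncard - 1 :=
              Set.ncard_diff_singleton_of_mem hu'N
            have h4' : 0 < Nf.ncard := (Set.ncard_pos (Set.toFinite _)).mpr ⟨u', hu'N⟩
            omega
          · have h116 : Nf.ncard ≤ 116 := by
              have hn : ¬ 117 ≤ Nf.ncard := fun h => hbad ⟨hwadj.symm, hfw, h⟩
              omega
            have hsub : {u | G.Adj w u ∧ g u = 2} ⊆ insert v Nf := by
              rintro u ⟨ha, hgu⟩
              by_cases huv : u = v
              · exact Set.mem_insert_iff.mpr (Or.inl huv)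
              · exact Set.mem_insert_iff.mpr (Or.inr (hmem u ha hgu huv).1)
            have h1 := Set.ncard_le_ncard hsub (Set.toFinite _)
            have h2 := Set.ncard_insert_le v Nf
            omega
        · have hsub : {u | G.Adj w u ∧ g u = 2} ⊆ Nf := by
            rintro u ⟨ha, hgu⟩
            by_cases huv : u = v
            · exact absurd (huv ▸ ha) hwadj
            · exact (hmem u ha hgu huv).1
          exact le_trans (Set.ncard_le_ncard hsub (Set.toFinite _)) hNf
      have hd : (![0, 0, 117] : Fin 3 → ℕ) (f w) = 117 := by rw [hfw]; rfl
      rw [hd]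
      exact hgoal
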